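/- Let n ≥ 2 have unique decomposition n = a·f_t + b·f_{t-1} with 1 ≤ a ≤ b ≤ f_t, t ≥ 2, and suppose a > f_{t-1} (equivalently, n has two n-good pairs). Then t is even if and only if the nearest integer to φ·n equals ⌊φ·n⌋; more precisely, if t is even then φ·n − ⌊φ·n⌋ < 1/2, and if t is odd then ⌈φ·n⌉ − φ·n < 1/2. -/

import Mathlib

set_option maxHeartbeats 1000000

open Real goldenRatio

noncomputable def phi : ℝ := (1 + Real.sqrt 5) / 2

theorem stmt15 (n : ℤ) (hn : 2 ≤ n) (a b : ℤ) (t : ℕ) (ht : 2 ≤ t)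
    (ha : 1 ≤ a) (hab : a ≤ b) (hb : b ≤ (Nat.fib t : ℤ))
    (hdec : n = a * (Nat.fib t : ℤ) + b * (Nat.fib (t - 1) : ℤ))
    (htwo : (Nat.fib (t - 1) : ℤ) < a) :
    (Even t → phi * n - ⌊phi * (n : ℝ)⌋ < 1 / 2) ∧
    (Odd t → (⌈phi * (n : ℝ)⌉ : ℝ) - phi * n < 1 / 2) := by
  have hphi : phi = φ := rfl
  obtain ⟨m, rfl⟩ : ∃ m, t = m + 1 := ⟨t - 1, by omega⟩
  have hm : 1 ≤ m := by omega
  simp only [Nat.add_sub_cancel] at hdec htwo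
  have hs5sq : √5 ^ 2 = 5 := Real.sq_sqrt (by norm_num)
  have hs5nn : (0:ℝ) ≤ √5 := Real.sqrt_nonneg 5
  have hs2 : (2:ℝ) < √5 := by nlinarith
  have hs3 : √5 < 3 := by nlinarith
  have hψ1 : ψ < -(1/2) := by simp only [goldenConj]; linarith
  have hψ2 : -1 < ψ := by simp only [goldenConj]; linarith
  have hψ0 : ψ < 0 := by linarith
  have hgc : φ * ψ = -1 := goldenRatio_mul_goldenConj
  have hga : φ + ψ = 1 := goldenRatio_add_goldenConj
  set p : ℝ := ψ ^ m with hp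
  set q : ℝ := φ ^ m with hq
  have habs : |p| ≤ -ψ := by
    rw [hp, abs_pow, abs_of_neg hψ0]
    exact pow_le_of_le_one (by linarith) (by linarith) (by omega)
  have hpq : q * p = (φ * ψ) ^ m := by rw [hp, hq, ← mul_pow]
  have h5ne : √5 ≠ 0 := by positivity
  have hbin : (Nat.fib m : ℝ) * √5 = q - p := by
    rw [hq, hp, Real.coe_fib_eq m, div_mul_cancel₀ _ h5ne]
  have hfib1 : (Nat.fib (m+1) : ℝ) = φ * Nat.fib m + p := by
    have := fib_succ_sub_goldenRatio_mul_fib m; rw [hp]; linarith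
  have hfib2 : (Nat.fib (m+2) : ℝ) = φ * Nat.fib (m+1) + ψ * p := by
    have h := fib_succ_sub_goldenRatio_mul_fib (m+1)
    have : ψ ^ (m+1) = ψ * p := by rw [hp]; ring
    rw [this] at h; linarith
  set N : ℤ := a * Nat.fib (m+2) + b * Nat.fib (m+1) with hN
  have hnr : (n:ℝ) = a * Nat.fib (m+1) + b * Nat.fib m := by exact_mod_cast hdec
  have hEeq : phi * n = (N:ℝ) - (ψ * a + b) * p := by
    rw [hphi, hnr, hN]
    push_cast
    rw [hfib2, hfib1]
    ring
  have hbr : (b:ℝ) ≤ Nat.fib (m+1) := by exact_mod_cast hb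
  have har : (Nat.fib m : ℝ) + 1 ≤ a := by
    have : (Nat.fib m : ℤ) + 1 ≤ a := htwo
    exact_mod_cast this
  have har1 : (1:ℝ) ≤ a := by exact_mod_cast ha
  have habr : (a:ℝ) ≤ b := by exact_mod_cast hab
  have hposm : 0 < ψ * a + b := by nlinarith
  -- the common upper bound for ψ*a + b
  have hAB : ψ * a + b ≤ (Nat.fib m : ℝ) + p + ψ := by
    have hA : ψ * a ≤ ψ * ((Nat.fib m : ℝ) + 1) :=
      mul_le_mul_of_nonpos_left har (le_of_lt hψ0)
    have hB : (Nat.fib (m+1) : ℝ) + ψ * ((Nat.fib m : ℝ) + 1)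
        = (Nat.fib m : ℝ) + p + ψ := by
      rw [hfib1]; linear_combination (Nat.fib m : ℝ) * hga
    linarith
  constructor
  · -- t = m+1 even, m odd
    intro hev
    have hmodd : Odd m := by
      rcases hev with ⟨k, hk⟩
      exact ⟨k - 1, by omega⟩
    have hpneg : p < 0 := hmodd.pow_neg hψ0
    have hpq' : p * q = -1 := by rw [mul_comm p q, hpq, hgc, hmodd.neg_one_pow]
    have hple : ψ ≤ p := by
      have := habs
      rw [abs_of_neg hpneg] at this
      linarith
    have hD : (-p) * ((Nat.fib m : ℝ) + p + ψ) < 1/2 := by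
      have hmul : √5 * ((-p) * ((Nat.fib m : ℝ) + p + ψ))
          = 1 + p^2 - √5 * p^2 - √5 * (p * ψ) := by
        linear_combination (-p) * hbin - hpq'
      have hpψ : 0 < p * ψ := mul_pos_of_neg_of_neg hpneg hψ0
      have h1 : √5 * ((-p) * ((Nat.fib m : ℝ) + p + ψ)) < √5 * (1/2) := by
        rw [hmul]
        nlinarith [sq_nonneg p, mul_pos (show (0:ℝ) < √5 by linarith) hpψ]
      exact lt_of_mul_lt_mul_left h1 hs5nn
    have hEb : (ψ * a + b) * (-p) ≤ ((Nat.fib m : ℝ) + p + ψ) * (-p) :=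
      mul_le_mul_of_nonneg_right hAB (by linarith)
    have h1 : (N:ℝ) < phi * n := by
      have : (ψ * a + b) * p < 0 := mul_neg_of_pos_of_neg hposm hpneg
      rw [hEeq]; linarith
    have h2 : phi * n < (N:ℝ) + 1/2 := by
      rw [hEeq]; nlinarith [hEb, hD]
    have hfloor : ⌊phi * (n:ℝ)⌋ = N := by
      rw [Int.floor_eq_iff]
      constructor
      · exact le_of_lt h1
      · push_cast; linarith
    rw [hfloor]
    linarith
  · -- t = m+1 odd, m even
    intro hodd
    have hmev : Even m := by
      rcases hodd with ⟨k, hk⟩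
      exact ⟨k, by omega⟩
    have hppos : 0 < p := hmev.pow_pos (ne_of_lt hψ0)
    have hpq' : p * q = 1 := by rw [mul_comm p q, hpq, hgc, hmev.neg_one_pow]
    have hple : p ≤ -ψ := by
      have := habs
      rw [abs_of_pos hppos] at this
      linarith
    have hD : p * ((Nat.fib m : ℝ) + p + ψ) < 1/2 := by
      have hmul : √5 * (p * ((Nat.fib m : ℝ) + p + ψ))
          = 1 - p^2 + √5 * p^2 + √5 * (p * ψ) := by
        linear_combination p * hbin + hpq'
      have hkey : p * p ≤ p * (-ψ) := mul_le_mul_of_nonneg_left hple (le_of_lt hppos)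
      have hpψ : p * ψ < 0 := mul_neg_of_pos_of_neg hppos hψ0
      have h1 : √5 * (p * ((Nat.fib m : ℝ) + p + ψ)) < √5 * (1/2) := by
        rw [hmul]
        nlinarith [mul_nonneg (show (0:ℝ) ≤ √5 - 1 by linarith)
          (show 0 ≤ -(p * ψ) - p * p by nlinarith), sq_nonneg p]
      exact lt_of_mul_lt_mul_left h1 hs5nn
    have hEb : (ψ * a + b) * p ≤ ((Nat.fib m : ℝ) + p + ψ) * p :=
      mul_le_mul_of_nonneg_right hAB (le_of_lt hppos)
    have h1 : phi * n < (N:ℝ) := by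
      have : 0 < (ψ * a + b) * p := mul_pos hposm hppos
      rw [hEeq]; linarith
    have h2 : (N:ℝ) - 1/2 < phi * n := by
      rw [hEeq]; nlinarith [hEb, hD]
    have hceil : ⌈phi * (n:ℝ)⌉ = N := by
      rw [Int.ceil_eq_iff]
      constructor
      · push_cast; linarith
      · exact le_of_lt h1
    rw [hceil]
    linarith
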